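/- Let S be a semigroup such that S² = {x·y : x, y ∈ S} is a rectangular band, i.e., (a·b)·(c·d)·(a·b) = a·b for all a, b, c, d ∈ S. Then S satisfies all of the following identities: (i) x·y·x·y = x·y; (ii) x·y·z·u·v = x·y·u·v; (iii) x·y·z·x·y = x·y; (iv) x·y·y·z = x·y·z; (v) x·x·x = x·x, for all x, y, z, u, v ∈ S. -/
import Mathlib


theorem stmt_3 {S : Type*} [Semigroup S]
    (hRB : ∀ a b c d : S, (a * b) * (c * d) * (a * b) = a * b) :
    (∀ x y : S, x * y * x * y = x * y) ∧
    (∀ x y z u v : S, x * y * z * u * v = x * y * u * v) ∧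
    (∀ x y z : S, x * y * z * x * y = x * y) ∧
    (∀ x y z : S, x * y * y * z = x * y * z) ∧
    (∀ x : S, x * x * x = x * x) := by
  -- idempotency of products
  have hidem : ∀ a b : S, (a * b) * (a * b) = a * b := by
    intro a b
    have h3 : (a*b)*(a*b)*(a*b) = a*b := hRB a b a b
    have h4 : (a*b)*((a*b)*(a*b))*(a*b) = a*b := hRB a b (a*b) (a*b)
    calc (a*b)*(a*b) = ((a*b)*(a*b)*(a*b))*(a*b) := by rw [h3]
      _ = (a*b)*((a*b)*(a*b))*(a*b) := by rw [mul_assoc (a*b) (a*b) (a*b)]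
      _ = a*b := h4
  -- middle cancellation in S²
  have hmid : ∀ a b c d e f : S, (a*b) * (c*d) * (e*f) = (a*b) * (e*f) := by
    intro a b c d e f
    have h1 : (a*b)*(c*d)*(a*b) = a*b := hRB a b c d
    have h2 : (e*f)*(c*d)*(e*f) = e*f := hRB e f c d
    have h3 : (c*d)*((a*b)*(e*f))*(c*d) = c*d := by
      rw [mul_assoc a b (e*f)]; exact hRB c d a (b*(e*f))
    calc (a*b)*(c*d)*(e*f) = (a*b)*((c*d)*((a*b)*(e*f))*(c*d))*(e*f) := by rw [h3]
      _ = ((a*b)*(c*d)*(a*b))*((e*f)*(c*d)*(e*f)) := by simp only [mul_assoc]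
      _ = (a*b)*(e*f) := by rw [h1, h2]
  have hi : ∀ x y : S, x * y * x * y = x * y := by
    intro x y
    rw [mul_assoc (x*y) x y]; exact hidem x y
  have hii : ∀ x y z u v : S, x * y * z * u * v = x * y * u * v := by
    intro x y z u v
    calc x*y*z*u*v = (x*y)*(z*(u*v)) := by simp only [mul_assoc]
      _ = (x*y)*(z*((u*v)*(u*v))) := by rw [hidem u v]
      _ = (x*y)*(z*(u*v))*(u*v) := by simp only [mul_assoc]
      _ = (x*y)*(u*v) := hmid x y z (u*v) u v
      _ = x*y*u*v := (mul_assoc (x*y) u v).symm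
  have hiii : ∀ x y z : S, x * y * z * x * y = x * y := by
    intro x y z
    calc x*y*z*x*y = (x*y)*(z*(x*y)) := by simp only [mul_assoc]
      _ = (x*y)*(z*((x*y)*(x*y))) := by rw [hidem x y]
      _ = (x*y)*(z*(x*y))*(x*y) := by simp only [mul_assoc]
      _ = x*y := hRB x y z (x*y)
  have hiv : ∀ x y z : S, x * y * y * z = x * y * z := by
    intro x y z
    calc x*y*y*z = x*y*z*y*z := (hii x y z y z).symm
      _ = x*((y*z)*(y*z)) := by simp only [mul_assoc]
      _ = x*(y*z) := by rw [hidem y z]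
      _ = x*y*z := (mul_assoc x y z).symm
  refine ⟨hi, hii, hiii, hiv, ?_⟩
  intro x
  calc x*x*x = x*x*x*x := (hiv x x x).symm
    _ = (x*x)*(x*x) := by simp only [mul_assoc]
    _ = x*x := hidem x x
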